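/- Let p be a prime and let Q(p,a) denote the number of primes ℓ with 1 ≤ ℓ ≤ p-1 such that q_p(ℓ) = a. Then the sum over a from 0 to p-1 of Q(p,a)^2 is at most π(p-1) + p - 2, where π denotes the prime counting function. -/

import Mathlib

/-- The Fermat quotient `q_p(u)`: the unique integer in `[0, p-1]` congruent to
`(u^(p-1) - 1)/p` modulo `p` when `gcd(u,p) = 1`, and `0` on multiples of `p`. -/
def fermatQuotient (p : ℕ) (u : ℤ) : ℤ :=
  if (p : ℤ) ∣ u then 0 else ((u ^ (p - 1) - 1) / (p : ℤ)) % (p : ℤ)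

/-- `Q(p,a)`: the number of primes `ℓ` with `1 ≤ ℓ ≤ p-1` and `q_p(ℓ) = a`. -/
def Qcount (p : ℕ) (a : ℕ) : ℕ :=
  ((Finset.Icc 1 (p - 1)).filter
    (fun l : ℕ => l.Prime ∧ fermatQuotient p (l : ℤ) = (a : ℤ))).card

lemma aux_one_add_pow {R : Type*} [CommRing R] (x : R) (hx : x ^ 2 = 0) (n : ℕ) :
    (1 + x) ^ n = 1 + n * x := by
  induction n with
  | zero => simp
  | succ n ih =>
    have h : (1 + (n : R) * x) * (1 + x) = 1 + ((n : R) + 1) * x + (n : R) * x ^ 2 := by ring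
    rw [pow_succ, ih, h, hx, mul_zero, add_zero]
    push_cast; ring

lemma aux_kernel (p : ℕ) (hp : p.Prime) (z : ZMod (p ^ 2))
    (h1 : ZMod.castHom (dvd_pow_self p two_ne_zero) (ZMod p) z = 1)
    (h2 : z ^ (p - 1) = 1) : z = 1 := by
  have hN : NeZero (p ^ 2) := ⟨pow_ne_zero 2 hp.ne_zero⟩
  obtain ⟨v, rfl⟩ := ZMod.natCast_zmod_surjective z
  rw [map_natCast] at h1
  -- h1 : (v : ZMod p) = 1
  have hmod : (v : ℕ) ≡ 1 [MOD p] := by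
    have := (ZMod.natCast_eq_natCast_iff v 1 p).mp (by simpa using h1)
    simpa using this
  obtain ⟨t, ht⟩ : ∃ t : ℤ, (v : ℤ) = 1 + p * t := by
    obtain ⟨t, ht⟩ := (Nat.modEq_iff_dvd (n := p)).mp hmod.symm
    refine ⟨t, by push_cast at ht ⊢; linarith⟩
  have hz : ((v : ℕ) : ZMod (p ^ 2)) = 1 + (p : ZMod (p ^ 2)) * (t : ZMod (p ^ 2)) := by
    have : (((v : ℤ)) : ZMod (p ^ 2)) = ((1 + (p : ℤ) * t : ℤ) : ZMod (p ^ 2)) := by rw [ht]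
    push_cast at this ⊢
    simpa using this
  set x : ZMod (p ^ 2) := (p : ZMod (p ^ 2)) * (t : ZMod (p ^ 2)) with hxdef
  have hx2 : x ^ 2 = 0 := by
    have hpp : ((p : ZMod (p ^ 2))) ^ 2 = 0 := by
      have : ((p ^ 2 : ℕ) : ZMod (p ^ 2)) = 0 := ZMod.natCast_self _
      push_cast at this; exact this
    rw [hxdef, mul_pow, hpp, zero_mul]
  rw [hz, aux_one_add_pow x hx2] at h2
  have hx0 : ((p - 1 : ℕ) : ZMod (p ^ 2)) * x = 0 := by
    have h3 : (1 : ZMod (p ^ 2)) + ((p - 1 : ℕ) : ZMod (p ^ 2)) * x = 1 := h2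
    linear_combination h3
  have hu : IsUnit ((p - 1 : ℕ) : ZMod (p ^ 2)) := by
    rw [ZMod.isUnit_iff_coprime]
    have h1 : Nat.Coprime (p - 1) p := by
      have h2 : Nat.Coprime ((p - 1) + 1) (p - 1) := by simp
      rw [Nat.sub_add_cancel hp.one_le] at h2
      exact h2.symm
    exact h1.pow_right 2
  have hxz : x = 0 := by
    obtain ⟨u, hu'⟩ := hu
    have := congrArg (fun y => (↑u⁻¹ : ZMod (p ^ 2)) * y) hx0
    simpa [← hu', ← mul_assoc] using this
  rw [hz, hxz, add_zero]

lemma aux_card_T (p : ℕ) (hp : p.Prime) [NeZero (p ^ 2)] :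
    (Finset.univ.filter (fun x : ZMod (p ^ 2) => x ^ (p - 1) = 1 ∧ x ≠ 1)).card ≤ p - 2 := by
  haveI : Fact p.Prime := ⟨hp⟩
  have h2p := hp.two_le
  have hpe : p - 2 + 1 = p - 1 := by omega
  set φ : ZMod (p ^ 2) →+* ZMod p := ZMod.castHom (dvd_pow_self p two_ne_zero) (ZMod p)
  have hcard : (Finset.univ.filter (fun y : ZMod p => y ≠ 0 ∧ y ≠ 1)).card = p - 2 := by
    have h01 : ((({0, 1} : Finset (ZMod p))).card) = 2 := by
      rw [Finset.card_insert_of_notMem (by simp), Finset.card_singleton]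
    have : (Finset.univ.filter (fun y : ZMod p => y ≠ 0 ∧ y ≠ 1))
        = Finset.univ \ ({0, 1} : Finset (ZMod p)) := by
      ext y; simp [and_comm]
    rw [this, Finset.card_sdiff_of_subset (Finset.subset_univ _), h01, Finset.card_univ, ZMod.card]
  rw [← hcard]
  apply Finset.card_le_card_of_injOn φ
  · intro x hx
    simp only [Finset.mem_coe, Finset.mem_filter, Finset.mem_univ, true_and] at hx ⊢
    obtain ⟨hx1, hx2⟩ := hx
    have hφpow : (φ x) ^ (p - 1) = 1 := by rw [← map_pow, hx1, map_one]
    constructor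
    · intro h0
      rw [h0, zero_pow (by omega : p - 1 ≠ 0)] at hφpow
      exact zero_ne_one hφpow
    · intro h1
      exact hx2 (aux_kernel p hp x h1 hx1)
  · intro x hx y hy hxy
    simp only [Finset.mem_coe, Finset.mem_filter, Finset.mem_univ, true_and] at hx hy
    obtain ⟨hx1, _⟩ := hx
    obtain ⟨hy1, _⟩ := hy
    have hyu : IsUnit (y ^ (p - 2)) := IsUnit.of_mul_eq_one y (by
      rw [← pow_succ, hpe, hy1])
    have hz1 : (x * y ^ (p - 2)) ^ (p - 1) = 1 := by
      rw [mul_pow, hx1, one_mul, ← pow_mul, mul_comm (p-2), pow_mul, hy1, one_pow]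
    have hzc : φ (x * y ^ (p - 2)) = 1 := by
      rw [map_mul, map_pow, hxy, ← map_pow, ← map_mul, ← pow_succ', hpe, hy1, map_one]
    have hz := aux_kernel p hp _ hzc hz1
    have : x * y ^ (p - 2) = y * y ^ (p - 2) := by
      rw [hz, ← pow_succ', hpe, hy1]
    exact hyu.mul_right_cancel this

lemma aux_fq_pow (p : ℕ) (hp : p.Prime) {l r : ℕ} (hl : ¬ p ∣ l) (hr : ¬ p ∣ r)
    (h : fermatQuotient p (l : ℤ) = fermatQuotient p (r : ℤ)) :
    ((l : ZMod (p ^ 2))) ^ (p - 1) = (r : ZMod (p ^ 2)) ^ (p - 1) := by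
  haveI : Fact p.Prime := ⟨hp⟩
  have key : ∀ m : ℕ, ¬ p ∣ m → (p : ℤ) ∣ (m : ℤ) ^ (p - 1) - 1 := by
    intro m hm
    have h0 : ((m : ℕ) : ZMod p) ≠ 0 := by
      rw [Ne, ZMod.natCast_eq_zero_iff]
      exact hm
    have h1 := ZMod.pow_card_sub_one_eq_one h0
    rw [← ZMod.intCast_zmod_eq_zero_iff_dvd]
    push_cast
    rw [h1, sub_self]
  have hdl := key l hl
  have hdr := key r hr
  have hql : fermatQuotient p (l : ℤ) = (((l:ℤ) ^ (p-1) - 1) / p) % p := by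
    rw [fermatQuotient, if_neg (by rwa [Int.natCast_dvd_natCast])]
  have hqr : fermatQuotient p (r : ℤ) = (((r:ℤ) ^ (p-1) - 1) / p) % p := by
    rw [fermatQuotient, if_neg (by rwa [Int.natCast_dvd_natCast])]
  rw [hql, hqr] at h
  have hmeq : ((l:ℤ)^(p-1) - 1) / p ≡ ((r:ℤ)^(p-1) - 1) / p [ZMOD p] := h
  have h2 : (p:ℤ) * (((l:ℤ)^(p-1) - 1) / p) ≡ (p:ℤ) * (((r:ℤ)^(p-1) - 1) / p) [ZMOD (p:ℤ) * p] :=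
    hmeq.mul_left' 
  rw [Int.mul_ediv_cancel' hdl, Int.mul_ediv_cancel' hdr] at h2
  have h3 : (l:ℤ)^(p-1) ≡ (r:ℤ)^(p-1) [ZMOD (p^2 : ℕ)] := by
    have h4 := h2.add_right 1
    simp only [sub_add_cancel] at h4
    rw [show ((p^2 : ℕ) : ℤ) = (p : ℤ) * p by push_cast; ring]
    exact h4
  have := (ZMod.intCast_eq_intCast_iff _ _ _).mpr h3
  push_cast at this
  exact this

theorem sum_sq_Qcount_le (p : ℕ) (hp : p.Prime) :
    ∑ a ∈ Finset.range p, (Qcount p a) ^ 2 ≤ Nat.primeCounting (p - 1) + p - 2 := by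
  haveI : Fact p.Prime := ⟨hp⟩
  haveI : NeZero (p ^ 2) := ⟨pow_ne_zero 2 hp.ne_zero⟩
  have h2p := hp.two_le
  have hpp : p ^ 2 = p * p := sq p
  have hpsq : p ≤ p ^ 2 := by nlinarith
  set S : Finset ℕ := (Finset.Icc 1 (p - 1)).filter Nat.Prime with hSdef
  set f : ℕ → ℤ := fun l => fermatQuotient p (l : ℤ) with hfdef
  have hSmem : ∀ l ∈ S, l.Prime ∧ 1 ≤ l ∧ l ≤ p - 1 := by
    intro l hl
    rw [hSdef, Finset.mem_filter, Finset.mem_Icc] at hl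
    exact ⟨hl.2, hl.1.1, hl.1.2⟩
  have hSnd : ∀ l ∈ S, ¬ p ∣ l := by
    intro l hl hdvd
    obtain ⟨_, h1, h2⟩ := hSmem l hl
    have := Nat.le_of_dvd (by omega) hdvd
    omega
  have hunit : ∀ l ∈ S, IsUnit ((l : ℕ) : ZMod (p ^ 2)) := by
    intro l hl
    rw [ZMod.isUnit_iff_coprime]
    exact ((hp.coprime_iff_not_dvd).mpr (hSnd l hl)).symm.pow_right 2
  have hQ : ∀ a : ℕ, Qcount p a = (S.filter (fun l => f l = (a : ℤ))).card := by
    intro a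
    rw [Qcount, hSdef, Finset.filter_filter]
  set P : Finset (ℕ × ℕ) := (S ×ˢ S).filter (fun x => f x.1 = f x.2) with hPdef
  have hfval : ∀ l ∈ S, ∃ a : ℕ, a < p ∧ f l = (a : ℤ) := by
    intro l hl
    have hnd := hSnd l hl
    have hfl : f l = (((l:ℤ) ^ (p-1) - 1) / p) % p := by
      show fermatQuotient p ((l : ℕ) : ℤ) = _
      rw [fermatQuotient, if_neg (by rwa [Int.natCast_dvd_natCast])]
    have hp0 : (0:ℤ) < p := by exact_mod_cast hp.pos
    have hnn : 0 ≤ f l := by rw [hfl]; exact Int.emod_nonneg _ (by positivity)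
    have hlt : f l < p := by rw [hfl]; exact Int.emod_lt_of_pos _ hp0
    refine ⟨(f l).toNat, by omega, by omega⟩
  -- Step A : sum of squares equals number of coincident pairs
  have hA : ∑ a ∈ Finset.range p, (Qcount p a) ^ 2 = P.card := by
    have hpart : P = (Finset.range p).biUnion
        (fun a => (S.filter (fun l => f l = (a:ℤ))) ×ˢ (S.filter (fun l => f l = (a:ℤ)))) := by
      ext x
      simp only [hPdef, Finset.mem_filter, Finset.mem_product, Finset.mem_biUnion,
        Finset.mem_range]
      constructor
      · rintro ⟨⟨h1, h2⟩, h3⟩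
        obtain ⟨a, ha, hfa⟩ := hfval x.1 h1
        exact ⟨a, ha, ⟨⟨h1, hfa⟩, ⟨h2, by rw [← h3]; exact hfa⟩⟩⟩
      · rintro ⟨a, _, ⟨h1, e1⟩, h2, e2⟩
        exact ⟨⟨h1, h2⟩, by rw [e1, e2]⟩
    have hdisj : ∀ a ∈ Finset.range p, ∀ b ∈ Finset.range p, a ≠ b →
        Disjoint ((S.filter (fun l => f l = (a:ℤ))) ×ˢ (S.filter (fun l => f l = (a:ℤ))))
          ((S.filter (fun l => f l = (b:ℤ))) ×ˢ (S.filter (fun l => f l = (b:ℤ)))) := by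
      intro a _ b _ hab
      rw [Finset.disjoint_left]
      rintro x hx hy
      simp only [Finset.mem_product, Finset.mem_filter] at hx hy
      apply hab
      have : (a : ℤ) = (b : ℤ) := by rw [← hx.1.2, hy.1.2]
      exact_mod_cast this
    rw [hpart, Finset.card_biUnion hdisj]
    refine Finset.sum_congr rfl fun a _ => ?_
    rw [hQ, Finset.card_product, sq]
  -- Step B
  have hsplit := Finset.card_filter_add_card_filter_not
    (s := P) (p := fun x => x.1 = x.2)
  set D := P.filter (fun x => x.1 = x.2) with hDdef
  set O := P.filter (fun x => ¬ x.1 = x.2) with hOdef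
  have hD : D.card = Nat.primeCounting (p - 1) := by
    have himg : D = S.image (fun l => (l, l)) := by
      ext x
      simp only [hDdef, hPdef, Finset.mem_filter, Finset.mem_product, Finset.mem_image]
      constructor
      · rintro ⟨⟨⟨h1, h2⟩, _⟩, h4⟩
        exact ⟨x.1, h1, by rw [Prod.ext_iff]; exact ⟨rfl, h4⟩⟩
      · rintro ⟨l, hl, rfl⟩
        exact ⟨⟨⟨hl, hl⟩, rfl⟩, rfl⟩
    have hinj : Function.Injective (fun l : ℕ => (l, l)) := by
      intro a b h
      exact (Prod.ext_iff.mp h).1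
    rw [himg, Finset.card_image_of_injective _ hinj]
    rw [Nat.primeCounting, Nat.primeCounting', Nat.count_eq_card_filter_range]
    congr 1
    ext l
    simp only [hSdef, Finset.mem_filter, Finset.mem_Icc, Finset.mem_range]
    constructor
    · rintro ⟨⟨h1, h2⟩, h3⟩
      exact ⟨by omega, h3⟩
    · rintro ⟨h1, h3⟩
      exact ⟨⟨h3.one_lt.le, by omega⟩, h3⟩
  have hO : O.card ≤ p - 2 := by
    refine le_trans ?_ (aux_card_T p hp)
    set g : ℕ × ℕ → ZMod (p ^ 2) :=
      fun x => (x.1 : ZMod (p ^ 2)) * (x.2 : ZMod (p ^ 2))⁻¹ with hgdef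
    have hOP : ∀ x ∈ O, x ∈ P ∧ x.1 ≠ x.2 := by
      intro x hx
      rw [hOdef, Finset.mem_filter] at hx
      exact hx
    have hmemP : ∀ x ∈ P, x.1 ∈ S ∧ x.2 ∈ S ∧ f x.1 = f x.2 := by
      intro x hx
      rw [hPdef, Finset.mem_filter, Finset.mem_product] at hx
      exact ⟨hx.1.1, hx.1.2, hx.2⟩
    have hgr : ∀ x ∈ O, g x * (x.2 : ZMod (p ^ 2)) = (x.1 : ZMod (p ^ 2)) := by
      intro x hx
      obtain ⟨hxP, _⟩ := hOP x hx
      obtain ⟨h1, h2, _⟩ := hmemP x hxP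
      rw [hgdef]
      have := ZMod.inv_mul_of_unit _ (hunit x.2 h2)
      calc (x.1 : ZMod (p ^ 2)) * (x.2 : ZMod (p ^ 2))⁻¹ * (x.2 : ZMod (p ^ 2))
          = (x.1 : ZMod (p ^ 2)) * ((x.2 : ZMod (p ^ 2))⁻¹ * (x.2 : ZMod (p ^ 2))) := by ring
        _ = (x.1 : ZMod (p ^ 2)) := by rw [this, mul_one]
    have hcastinj : ∀ a ∈ S, ∀ b ∈ S, ((a : ℕ) : ZMod (p ^ 2)) = (b : ZMod (p ^ 2)) → a = b := by
      intro a ha b hb h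
      obtain ⟨_, ha1, ha2⟩ := hSmem a ha
      obtain ⟨_, hb1, hb2⟩ := hSmem b hb
      have := (ZMod.natCast_eq_natCast_iff a b (p ^ 2)).mp h
      have h1 : a % p ^ 2 = b % p ^ 2 := this
      rw [Nat.mod_eq_of_lt (by omega), Nat.mod_eq_of_lt (by omega)] at h1
      exact h1
    apply Finset.card_le_card_of_injOn g
    · intro x hx
      obtain ⟨hxP, hne⟩ := hOP x hx
      obtain ⟨h1, h2, h3⟩ := hmemP x hxP
      simp only [Finset.mem_coe, Finset.mem_filter, Finset.mem_univ, true_and]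
      constructor
      · have hpow := aux_fq_pow p hp (hSnd x.1 h1) (hSnd x.2 h2) h3
        have hmul : (g x) ^ (p - 1) * (x.2 : ZMod (p ^ 2)) ^ (p - 1)
            = (1 : ZMod (p ^ 2)) * (x.2 : ZMod (p ^ 2)) ^ (p - 1) := by
          rw [← mul_pow, hgr x hx, hpow, one_mul]
        exact ((hunit x.2 h2).pow (p - 1)).mul_right_cancel hmul
      · intro hg1
        apply hne
        apply hcastinj x.1 h1 x.2 h2
        rw [← hgr x hx, hg1, one_mul]
    · intro x hx y hy hxy
      obtain ⟨hxP, hnex⟩ := hOP x (Finset.mem_coe.mp hx)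
      obtain ⟨hyP, hney⟩ := hOP y (Finset.mem_coe.mp hy)
      obtain ⟨hx1, hx2, _⟩ := hmemP x hxP
      obtain ⟨hy1, hy2, _⟩ := hmemP y hyP
      obtain ⟨hx1p, hx1a, hx1b⟩ := hSmem x.1 hx1
      obtain ⟨hx2p, hx2a, hx2b⟩ := hSmem x.2 hx2
      obtain ⟨hy1p, hy1a, hy1b⟩ := hSmem y.1 hy1
      obtain ⟨hy2p, hy2a, hy2b⟩ := hSmem y.2 hy2
      have hcast : ((x.1 * y.2 : ℕ) : ZMod (p ^ 2)) = ((y.1 * x.2 : ℕ) : ZMod (p ^ 2)) := by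
        push_cast
        rw [← hgr x (Finset.mem_coe.mp hx), ← hgr y (Finset.mem_coe.mp hy), hxy]
        ring
      have hbnd : ∀ a b : ℕ, a ≤ p - 1 → b ≤ p - 1 → a * b < p ^ 2 := by
        intro a b ha hb
        have ha' : a < p := by omega
        have hb' : b < p := by omega
        calc a * b < p * p := mul_lt_mul'' ha' hb' (Nat.zero_le _) (Nat.zero_le _)
          _ = p ^ 2 := hpp.symm
      have heq : x.1 * y.2 = y.1 * x.2 := by
        have h1 := (ZMod.natCast_eq_natCast_iff _ _ _).mp hcast
        have h2 : (x.1 * y.2) % p ^ 2 = (y.1 * x.2) % p ^ 2 := h1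
        rw [Nat.mod_eq_of_lt (hbnd _ _ hx1b hy2b), Nat.mod_eq_of_lt (hbnd _ _ hy1b hx2b)] at h2
        exact h2
      have hdvd : x.1 ∣ y.1 * x.2 := heq ▸ dvd_mul_right x.1 y.2
      have h11 : x.1 = y.1 := by
        rcases (Nat.Prime.dvd_mul hx1p).mp hdvd with h | h
        · exact (Nat.prime_dvd_prime_iff_eq hx1p hy1p).mp h
        · exact absurd ((Nat.prime_dvd_prime_iff_eq hx1p hx2p).mp h) hnex
      have h22 : x.2 = y.2 := by
        rw [h11] at heq
        exact (Nat.eq_of_mul_eq_mul_left (by omega) heq).symm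
      exact Prod.ext h11 h22
  calc ∑ a ∈ Finset.range p, (Qcount p a) ^ 2 = P.card := hA
    _ = D.card + O.card := hsplit.symm
    _ ≤ Nat.primeCounting (p - 1) + (p - 2) := by rw [hD]; exact Nat.add_le_add_left hO _
    _ ≤ Nat.primeCounting (p - 1) + p - 2 := by omega
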